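/- Let m ≥ 1 and B ≥ 1 be integers, let A be a finite set, and let s : A → ℕ satisfy s(a) ≥ 1 for all a ∈ A and Σ_{a∈A} s(a) = mB. Let X be a finite set of variables equipped with maps p : X → {1,…,m} and q : X → A such that every fiber p⁻¹(i) has exactly B elements and every fiber q⁻¹(a) has exactly s(a) elements, and let t be a fresh variable not in X. Define Boolean functions over X ∪ {t} by S'(α) = α(t) ∧ (α is constant on every fiber of p) and U'(α) = α(t) ∧ (α is constant on every fiber of q). Then S' isomorphically implies U' if and only if there is a map c : A → {1,…,m} such that Σ_{a : c(a)=i} s(a) = B for every i ∈ {1,…,m}. -/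

import Mathlib

/-- Like STATEMENT 10 but with a fresh variable `t` (modeled as
`Sum.inr ()` in `X ⊕ Unit`), `S'(α) = α(t) ∧ (α constant on fibers of p)` and
`U'(α) = α(t) ∧ (α constant on fibers of q)`: `S' ⇒̃ U'` iff `A` can be
partitioned via `c : A → Fin m` so that each part has total size `B`. -/
theorem stmt_11 (m B : ℕ) (hm : 1 ≤ m) (hB : 1 ≤ B)
    {A : Type*} [Fintype A] [DecidableEq A] (s : A → ℕ)
    (hs : ∀ a : A, 1 ≤ s a) (hsum : ∑ a : A, s a = m * B)
    {X : Type*} [Fintype X] [DecidableEq X] (p : X → Fin m) (q : X → A)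
    (hp : ∀ i : Fin m, (Finset.univ.filter fun x => p x = i).card = B)
    (hq : ∀ a : A, (Finset.univ.filter fun x => q x = a).card = s a)
    (S' U' : (X ⊕ Unit → Bool) → Bool)
    (hS' : ∀ α : X ⊕ Unit → Bool, S' α = true ↔
      (α (Sum.inr ()) = true ∧ ∀ x x' : X, p x = p x' → α (Sum.inl x) = α (Sum.inl x')))
    (hU' : ∀ α : X ⊕ Unit → Bool, U' α = true ↔
      (α (Sum.inr ()) = true ∧ ∀ x x' : X, q x = q x' → α (Sum.inl x) = α (Sum.inl x'))) :
    (∃ π : Equiv.Perm (X ⊕ Unit), ∀ α : X ⊕ Unit → Bool, S' (α ∘ π) = true → U' α = true) ↔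
      (∃ c : A → Fin m, ∀ i : Fin m, ∑ a ∈ Finset.univ.filter fun a => c a = i, s a = B) := by
  constructor
  · rintro ⟨π, hπ⟩
    -- Step 1: π fixes inr ()
    have hfix : π (Sum.inr ()) = Sum.inr () := by
      rcases h : π (Sum.inr ()) with x0 | u
      · exfalso
        set α : X ⊕ Unit → Bool := fun z => decide (z = Sum.inl x0) with hα
        have hSa : S' (α ∘ π) = true := by
          rw [hS']
          constructor
          · simp [α, Function.comp, h]
          · intro x x' _
            have h1 : π (Sum.inl x) ≠ Sum.inl x0 := by
              rw [← h]; exact fun hc => by simpa using π.injective hc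
            have h2 : π (Sum.inl x') ≠ Sum.inl x0 := by
              rw [← h]; exact fun hc => by simpa using π.injective hc
            simp [α, Function.comp, h1, h2]
        have := (hU' α).mp (hπ α hSa)
        simp [α] at this
      · rfl
    -- Step 2: extract σ : X → X
    have hσex : ∀ x : X, ∃ y : X, π (Sum.inl x) = Sum.inl y := by
      intro x
      rcases h : π (Sum.inl x) with y | u
      · exact ⟨y, rfl⟩
      · exfalso
        have : Sum.inl x = Sum.inr () := π.injective (by rw [h, hfix])
        simp at this
    choose σ hσ using hσex
    have hinj : Function.Injective σ := by
      intro x x' hxx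
      have : π (Sum.inl x) = π (Sum.inl x') := by rw [hσ, hσ, hxx]
      simpa using π.injective this
    have hbij : Function.Bijective σ := (Finite.injective_iff_bijective).mp hinj
    set e : X ≃ X := Equiv.ofBijective σ hbij with he
    have heσ : ∀ x, e x = σ x := fun x => rfl
    -- key claim
    have key : ∀ x x' : X, q x = q x' → p (e.symm x) = p (e.symm x') := by
      intro x x' hqx
      by_contra hne
      set i := p (e.symm x) with hi
      set α : X ⊕ Unit → Bool := fun z =>
        match z with
        | Sum.inl w => decide (p (e.symm w) = i)
        | Sum.inr _ => true with hα
      have hSa : S' (α ∘ π) = true := by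
        rw [hS']
        constructor
        · simp [α, Function.comp, hfix]
        · intro y y' hpy
          have e1 : (α ∘ π) (Sum.inl y) = decide (p y = i) := by
            simp [α, Function.comp, hσ, ← heσ, Equiv.symm_apply_apply]
          have e2 : (α ∘ π) (Sum.inl y') = decide (p y' = i) := by
            simp [α, Function.comp, hσ, ← heσ, Equiv.symm_apply_apply]
          rw [e1, e2, hpy]
      have hU := (hU' α).mp (hπ α hSa)
      have := hU.2 x x' hqx
      simp [α] at this
      exact hne (this.mp rfl).symm
    -- choose representatives
    have hrep : ∀ a : A, ∃ x : X, q x = a := by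
      intro a
      have : 0 < (Finset.univ.filter fun x => q x = a).card := by
        rw [hq]; exact hs a
      obtain ⟨x, hx⟩ := Finset.card_pos.mp this
      exact ⟨x, (Finset.mem_filter.mp hx).2⟩
    choose rep hrep using hrep
    refine ⟨fun a => p (e.symm (rep a)), ?_⟩
    set c : A → Fin m := fun a => p (e.symm (rep a)) with hcdef
    have hc : ∀ x : X, c (q x) = p (e.symm x) := fun x => key (rep (q x)) x (hrep (q x))
    intro i
    have h1 : (Finset.univ.filter fun x => c (q x) = i).card
        = ∑ a ∈ Finset.univ.filter fun a => c a = i, s a := by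
      rw [Finset.card_eq_sum_card_fiberwise
        (f := q) (t := Finset.univ.filter fun a => c a = i)
        (fun x hx => by simp at hx ⊢; exact hx)]
      refine Finset.sum_congr rfl fun a ha => ?_
      rw [← hq a]
      congr 1
      ext x
      simp only [Finset.mem_filter, Finset.mem_univ, true_and]
      constructor
      · exact fun hx => hx.2
      · intro hx
        refine ⟨?_, hx⟩
        rw [hx]
        exact (Finset.mem_filter.mp ha).2
    have h2 : (Finset.univ.filter fun x => c (q x) = i).card = B := by
      have : (Finset.univ.filter fun x => c (q x) = i)
          = (Finset.univ.filter fun x => p (e.symm x) = i) := by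
        ext x; simp [hc]
      rw [this, ← hp i]
      apply Finset.card_bij' (fun x _ => e.symm x) (fun x _ => e x)
      · intro x hx; simp at hx ⊢; exact hx
      · intro x hx; simp at hx ⊢; simpa using hx
      · intro x _; simp
      · intro x _; simp
    rw [← h1, h2]
  · rintro ⟨c, hc⟩
    -- cardinalities of fibers of c ∘ q
    have hcq : ∀ i : Fin m, (Finset.univ.filter fun x => c (q x) = i).card = B := by
      intro i
      rw [Finset.card_eq_sum_card_fiberwise
        (f := q) (t := Finset.univ.filter fun a => c a = i)
        (fun x hx => by simp at hx ⊢; exact hx)]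
      rw [← hc i]
      refine Finset.sum_congr rfl fun a ha => ?_
      rw [← hq a]
      congr 1
      ext x
      simp only [Finset.mem_filter, Finset.mem_univ, true_and]
      constructor
      · exact fun hx => hx.2
      · intro hx
        refine ⟨?_, hx⟩
        rw [hx]
        exact (Finset.mem_filter.mp ha).2
    have F : ∀ i : Fin m, {x // p x = i} ≃ {x // c (q x) = i} := by
      intro i
      apply Fintype.equivOfCardEq
      rw [Fintype.card_subtype, Fintype.card_subtype, hp, hcq]
    set e : X ≃ X :=
      ((Equiv.sigmaFiberEquiv p).symm.trans
        (Equiv.sigmaCongrRight fun i => F i)).trans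
        (Equiv.sigmaFiberEquiv fun x => c (q x)) with he
    have hekey : ∀ x : X, c (q (e x)) = p x := by
      intro x
      have : e x = ((F (p x)) ⟨x, rfl⟩).1 := rfl
      rw [this]
      exact ((F (p x)) ⟨x, rfl⟩).2
    refine ⟨Equiv.sumCongr e (Equiv.refl Unit), fun α hSa => ?_⟩
    rw [hS'] at hSa
    rw [hU']
    obtain ⟨ht, hconst⟩ := hSa
    constructor
    · simpa [Function.comp] using ht
    · intro x x' hqx
      have hx : x = e (e.symm x) := (e.apply_symm_apply x).symm
      have hx' : x' = e (e.symm x') := (e.apply_symm_apply x').symm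
      have hpp : p (e.symm x) = p (e.symm x') := by
        rw [← hekey (e.symm x), ← hekey (e.symm x'), e.apply_symm_apply,
          e.apply_symm_apply, hqx]
      have := hconst (e.symm x) (e.symm x') hpp
      simpa [Function.comp, Equiv.sumCongr] using this
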